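/- Let P_1,…,P_n be mutually independent random variables on a probability space Ω, with P_i taking values in a finite nonempty set D_i. Let A_1,…,A_m be events such that each A_j is measurable with respect to the σ-algebra generated by the variables {P_i : i ∈ vbl(j)} for some set vbl(j) ⊆ {1,…,n}, and define Γ(j) = {j' ≠ j : vbl(j) ∩ vbl(j') ≠ ∅}. Suppose there are a real p ∈ [0,1] and a natural number d such that Pr[A_j] ≤ p and |Γ(j)| ≤ d for every j, and e·p·(d+1) ≤ 1 (where e is Euler's number). Then Pr[⋂_{j=1}^m A_jᶜ] > 0; in particular the set of outcomes at which none of the events A_1,…,A_m happens is nonempty. -/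

import Mathlib

open MeasureTheory ProbabilityTheory

lemma lll_exp_aux (d : ℕ) : Real.exp (-1) ≤ (1 - 1/((d:ℝ)+1))^d := by
  rcases Nat.eq_zero_or_pos d with h | h
  · subst h
    simp only [pow_zero]
    have := Real.exp_le_exp.mpr (by norm_num : (-1:ℝ) ≤ 0)
    simpa using this
  · have hd : (0:ℝ) < d := by exact_mod_cast h
    have h2 : 1 + 1/(d:ℝ) ≤ Real.exp (1/(d:ℝ)) := by
      have := Real.add_one_le_exp (1/(d:ℝ)); linarith
    have h3 : (0:ℝ) < 1 + 1/(d:ℝ) := by positivity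
    have h4 : (1 + 1/(d:ℝ))⁻¹ = 1 - 1/((d:ℝ)+1) := by
      field_simp
      ring
    have h1 : Real.exp (-(1/(d:ℝ))) ≤ 1 - 1/((d:ℝ)+1) := by
      rw [Real.exp_neg, ← h4]
      exact inv_anti₀ h3 h2
    have h5 : Real.exp (-1) = (Real.exp (-(1/(d:ℝ))))^d := by
      rw [← Real.exp_nat_mul]
      congr 1
      field_simp
    rw [h5]
    exact pow_le_pow_left₀ (Real.exp_pos _).le h1 d

/-- The purely measure-theoretic core of the symmetric local lemma: given the
product rule for events against intersections of non-neighbours, every finite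
intersection of complements has positive probability. -/
lemma lll_core {Ω : Type*} [MeasurableSpace Ω] (μ : Measure Ω) [IsProbabilityMeasure μ]
    {m : ℕ} (A : Fin m → Set Ω) (hAmeas : ∀ j, MeasurableSet (A j))
    (Γ : Fin m → Finset (Fin m)) (p : ℝ) (hp0 : 0 ≤ p) (d : ℕ)
    (hprob : ∀ j, (μ (A j)).toReal ≤ p)
    (hdeg : ∀ j, (Γ j).card ≤ d)
    (hepd : Real.exp 1 * p * (d + 1) ≤ 1)
    (hfact : ∀ (j : Fin m) (S : Finset (Fin m)), j ∉ S → (∀ k ∈ S, k ∉ Γ j) →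
      μ (A j ∩ ⋂ k ∈ S, (A k)ᶜ) = μ (A j) * μ (⋂ k ∈ S, (A k)ᶜ)) :
    ∀ S : Finset (Fin m), 0 < (μ (⋂ k ∈ S, (A k)ᶜ)).toReal := by
  have hd0 : (0:ℝ) ≤ d := Nat.cast_nonneg d
  have hE2 : (2:ℝ) ≤ Real.exp 1 := by nlinarith [Real.add_one_le_exp (1:ℝ)]
  set q : ℝ := Real.exp 1 * p with hqdef
  have hq0 : 0 ≤ q := mul_nonneg (Real.exp_pos 1).le hp0
  have hq1 : q ≤ 1 := by nlinarith [hepd]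
  have hqd : q ≤ 1/((d:ℝ)+1) := by
    rw [le_div_iff₀ (by positivity)]; exact hepd
  have hpq : p ≤ q := by nlinarith
  have hexpd : ∀ c : ℕ, c ≤ d → Real.exp (-1) ≤ (1-q)^c := by
    intro c hc
    have hd1 : (0:ℝ) < (d:ℝ)+1 := by positivity
    have h00 : (0:ℝ) ≤ 1/((d:ℝ)+1) := by positivity
    have h0 : (0:ℝ) ≤ 1 - 1/((d:ℝ)+1) := by
      have : 1/((d:ℝ)+1) ≤ 1 := by rw [div_le_one hd1]; linarith
      linarith
    have h1 : 1 - 1/((d:ℝ)+1) ≤ 1 - q := by linarith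
    calc Real.exp (-1) ≤ (1 - 1/((d:ℝ)+1))^d := lll_exp_aux d
      _ ≤ (1 - 1/((d:ℝ)+1))^c := pow_le_pow_of_le_one h0 (by linarith) hc
      _ ≤ (1-q)^c := pow_le_pow_left₀ h0 h1 c
  have hfin : ∀ s : Set Ω, μ s ≠ ⊤ := fun s => measure_ne_top μ s
  have hsplit : ∀ (k : Fin m) (T : Finset (Fin m)), k ∉ T →
      (μ (⋂ x ∈ insert k T, (A x)ᶜ)).toReal
        = (μ (⋂ x ∈ T, (A x)ᶜ)).toReal - (μ (A k ∩ ⋂ x ∈ T, (A x)ᶜ)).toReal := by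
    intro k T hk
    have h1 : μ ((⋂ x ∈ T, (A x)ᶜ) ∩ A k) + μ ((⋂ x ∈ T, (A x)ᶜ) \ A k)
        = μ (⋂ x ∈ T, (A x)ᶜ) := measure_inter_add_diff _ (hAmeas k)
    have h2 : (⋂ x ∈ insert k T, (A x)ᶜ) = (⋂ x ∈ T, (A x)ᶜ) \ A k := by
      rw [Finset.set_biInter_insert, Set.diff_eq, Set.inter_comm]
    have h1' : (μ ((⋂ x ∈ T, (A x)ᶜ) ∩ A k)).toReal
        + (μ ((⋂ x ∈ T, (A x)ᶜ) \ A k)).toReal = (μ (⋂ x ∈ T, (A x)ᶜ)).toReal := by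
      rw [← ENNReal.toReal_add (hfin _) (hfin _), h1]
    rw [h2]
    rw [Set.inter_comm] at h1'
    linarith
  have key : ∀ (nn : ℕ) (S : Finset (Fin m)) (j : Fin m), S.card ≤ nn →
      (μ (A j ∩ ⋂ k ∈ S, (A k)ᶜ)).toReal ≤ q * (μ (⋂ k ∈ S, (A k)ᶜ)).toReal := by
    intro nn
    induction nn with
    | zero =>
      intro S j hS
      have hSe : S = ∅ := Finset.card_eq_zero.mp (Nat.le_zero.mp hS)
      subst hSe
      have hempty : (⋂ k ∈ (∅ : Finset (Fin m)), (A k)ᶜ) = Set.univ := by simp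
      rw [hempty]
      simp only [Set.inter_univ, measure_univ, ENNReal.toReal_one, mul_one]
      exact le_trans (hprob j) hpq
    | succ nn ih =>
      intro S j hS
      by_cases hjS : j ∈ S
      · have hempty : A j ∩ ⋂ k ∈ S, (A k)ᶜ = ∅ := by
          rw [Set.eq_empty_iff_forall_notMem]
          rintro x ⟨hxA, hxN⟩
          exact (Set.mem_iInter₂.mp hxN j hjS) hxA
        rw [hempty]
        simp only [measure_empty, ENNReal.toReal_zero]
        exact mul_nonneg hq0 ENNReal.toReal_nonneg
      · set S₁ : Finset (Fin m) := S ∩ Γ j with hS₁def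
        set S₂ : Finset (Fin m) := S \ Γ j with hS₂def
        have hS₂sub : S₂ ⊆ S := Finset.sdiff_subset
        have hS₁sub : S₁ ⊆ S := Finset.inter_subset_left
        have hUeq : S₂ ∪ S₁ = S := Finset.sdiff_union_inter S (Γ j)
        have h1mq : (0:ℝ) ≤ 1 - q := by linarith
        have peel : ∀ T : Finset (Fin m), T ⊆ S₁ →
            (1-q)^T.card * (μ (⋂ k ∈ S₂, (A k)ᶜ)).toReal
              ≤ (μ (⋂ k ∈ S₂ ∪ T, (A k)ᶜ)).toReal := by
          intro T
          induction T using Finset.induction_on with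
          | empty => intro _; simp
          | @insert a T ha ihT =>
            intro hsub
            have haS₁ : a ∈ S₁ := hsub (Finset.mem_insert_self a T)
            have hTsub : T ⊆ S₁ := (Finset.insert_subset_iff.mp hsub).2
            have haU : a ∉ S₂ ∪ T := by
              simp only [Finset.mem_union]
              rintro (h | h)
              · exact (Finset.mem_sdiff.mp h).2 (Finset.mem_of_mem_inter_right haS₁)
              · exact ha h
            have hUS : S₂ ∪ T ⊆ S := Finset.union_subset hS₂sub (hTsub.trans hS₁sub)
            have hcard : (S₂ ∪ T).card ≤ nn := by
              have hlt : (S₂ ∪ T).card < S.card :=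
                Finset.card_lt_card ⟨hUS, fun hcon => haU (hcon (hS₁sub haS₁))⟩
              omega
            have hb := ih (S₂ ∪ T) a hcard
            have hnn : 0 ≤ (μ (⋂ k ∈ S₂ ∪ T, (A k)ᶜ)).toReal := ENNReal.toReal_nonneg
            rw [Finset.union_insert, hsplit a (S₂ ∪ T) haU,
              Finset.card_insert_of_notMem ha]
            calc (1-q)^(T.card+1) * (μ (⋂ k ∈ S₂, (A k)ᶜ)).toReal
                = (1-q) * ((1-q)^T.card * (μ (⋂ k ∈ S₂, (A k)ᶜ)).toReal) := by ring
              _ ≤ (1-q) * (μ (⋂ k ∈ S₂ ∪ T, (A k)ᶜ)).toReal :=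
                  mul_le_mul_of_nonneg_left (ihT hTsub) h1mq
              _ ≤ (μ (⋂ k ∈ S₂ ∪ T, (A k)ᶜ)).toReal
                  - (μ (A a ∩ ⋂ k ∈ S₂ ∪ T, (A k)ᶜ)).toReal := by nlinarith
        have hPS := peel S₁ Finset.Subset.rfl
        rw [hUeq] at hPS
        have hcS₁ : S₁.card ≤ d := le_trans (Finset.card_le_card Finset.inter_subset_right) (hdeg j)
        have hE := hexpd S₁.card hcS₁
        have h6 : Real.exp (-1) * (μ (⋂ k ∈ S₂, (A k)ᶜ)).toReal
            ≤ (μ (⋂ k ∈ S, (A k)ᶜ)).toReal :=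
          le_trans (mul_le_mul_of_nonneg_right hE ENNReal.toReal_nonneg) hPS
        have hΓS₂ : ∀ k ∈ S₂, k ∉ Γ j := fun k hk => (Finset.mem_sdiff.mp hk).2
        have hjS₂ : j ∉ S₂ := fun h => hjS (hS₂sub h)
        have hprod := hfact j S₂ hjS₂ hΓS₂
        have hmono : (μ (A j ∩ ⋂ k ∈ S, (A k)ᶜ)).toReal
            ≤ (μ (A j ∩ ⋂ k ∈ S₂, (A k)ᶜ)).toReal := by
          refine ENNReal.toReal_mono (hfin _) (measure_mono ?_)
          refine Set.inter_subset_inter_right _ ?_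
          exact fun x hx => Set.mem_iInter₂.mpr fun k hk => Set.mem_iInter₂.mp hx k (hS₂sub hk)
        have hfinal : (μ (A j ∩ ⋂ k ∈ S₂, (A k)ᶜ)).toReal
            ≤ p * (μ (⋂ k ∈ S₂, (A k)ᶜ)).toReal := by
          rw [hprod, ENNReal.toReal_mul]
          exact mul_le_mul_of_nonneg_right (hprob j) ENNReal.toReal_nonneg
        have he : Real.exp (-1) * Real.exp 1 = 1 := by
          rw [← Real.exp_add]; norm_num
        have hrS₂ : (μ (⋂ k ∈ S₂, (A k)ᶜ)).toReal
            ≤ Real.exp 1 * (μ (⋂ k ∈ S, (A k)ᶜ)).toReal := by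
          have h7 := mul_le_mul_of_nonneg_left h6 (Real.exp_pos 1).le
          calc (μ (⋂ k ∈ S₂, (A k)ᶜ)).toReal
              = Real.exp 1 * (Real.exp (-1) * (μ (⋂ k ∈ S₂, (A k)ᶜ)).toReal) := by
                rw [← mul_assoc, mul_comm (Real.exp 1) (Real.exp (-1)), he, one_mul]
            _ ≤ Real.exp 1 * (μ (⋂ k ∈ S, (A k)ᶜ)).toReal := h7
        calc (μ (A j ∩ ⋂ k ∈ S, (A k)ᶜ)).toReal
            ≤ p * (μ (⋂ k ∈ S₂, (A k)ᶜ)).toReal := le_trans hmono hfinal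
          _ ≤ p * (Real.exp 1 * (μ (⋂ k ∈ S, (A k)ᶜ)).toReal) :=
              mul_le_mul_of_nonneg_left hrS₂ hp0
          _ = q * (μ (⋂ k ∈ S, (A k)ᶜ)).toReal := by rw [hqdef]; ring
  have half : ∀ (S : Finset (Fin m)) (j : Fin m),
      (μ (A j ∩ ⋂ k ∈ S, (A k)ᶜ)).toReal ≤ (1/2) * (μ (⋂ k ∈ S, (A k)ᶜ)).toReal := by
    intro S j
    by_cases hd : d = 0
    · by_cases hjS : j ∈ S
      · have hempty : A j ∩ ⋂ k ∈ S, (A k)ᶜ = ∅ := by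
          rw [Set.eq_empty_iff_forall_notMem]
          rintro x ⟨hxA, hxN⟩
          exact (Set.mem_iInter₂.mp hxN j hjS) hxA
        rw [hempty]
        simp only [measure_empty, ENNReal.toReal_zero]
        positivity
      · have hΓe : Γ j = ∅ := Finset.card_eq_zero.mp (by have := hdeg j; omega)
        have hΓS : ∀ k ∈ S, k ∉ Γ j := fun k _ hkΓ => by simp [hΓe] at hkΓ
        rw [hfact j S hjS hΓS, ENNReal.toReal_mul]
        have hp_half : p ≤ 1/2 := by
          subst hd
          push_cast at hepd
          nlinarith [hE2, hp0, hepd]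
        exact mul_le_mul_of_nonneg_right (le_trans (hprob j) hp_half) ENNReal.toReal_nonneg
    · have hd1 : 1 ≤ d := Nat.one_le_iff_ne_zero.mpr hd
      have hq_half : q ≤ 1/2 := by
        refine le_trans hqd ?_
        have h2d : (2:ℝ) ≤ (d:ℝ)+1 := by
          have : (1:ℝ) ≤ (d:ℝ) := by exact_mod_cast hd1
          linarith
        rw [div_le_div_iff₀ (by positivity) (by norm_num)]
        linarith
      exact le_trans (key S.card S j le_rfl)
        (mul_le_mul_of_nonneg_right hq_half ENNReal.toReal_nonneg)
  intro S
  induction S using Finset.induction_on with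
  | empty => simp
  | @insert k T hk ihT =>
    rw [hsplit k T hk]
    have := half T k
    linarith

/-- **Symmetric Lovász Local Lemma (variable framework).**
Mutually independent discrete random variables `P i : Ω → D i`, events `A j` each
measurable w.r.t. the σ-algebra generated by the variables indexed by `vbl j`,
dependency neighborhoods `Γ j = {j' ≠ j : vbl j ∩ vbl j' ≠ ∅}`.  If `Pr[A j] ≤ p`,
`|Γ j| ≤ d` for all `j` and `e · p · (d+1) ≤ 1`, then with positive probability
none of the events happens; in particular some outcome avoids all the events. -/
theorem lll_symmetric_variable_framework
    {Ω : Type*} [MeasurableSpace Ω] (μ : Measure Ω) [IsProbabilityMeasure μ]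
    {n m : ℕ} (D : Fin n → Type*) [∀ i, Fintype (D i)] [∀ i, Nonempty (D i)]
    [mD : ∀ i, MeasurableSpace (D i)]
    (P : ∀ i, Ω → D i) (hPmeas : ∀ i, Measurable (P i))
    (hindep : iIndepFun (m := mD) P μ)
    (A : Fin m → Set Ω) (vbl : Fin m → Finset (Fin n))
    (hA : ∀ j, MeasurableSet[⨆ i ∈ vbl j, MeasurableSpace.comap (P i) (mD i)] (A j))
    (Γ : Fin m → Finset (Fin m))
    (hΓ : ∀ j j', j' ∈ Γ j ↔ j' ≠ j ∧ (vbl j ∩ vbl j').Nonempty)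
    (p : ℝ) (hp : p ∈ Set.Icc (0 : ℝ) 1) (d : ℕ)
    (hprob : ∀ j, (μ (A j)).toReal ≤ p)
    (hdeg : ∀ j, (Γ j).card ≤ d)
    (hepd : Real.exp 1 * p * (d + 1) ≤ 1) :
    0 < μ (⋂ j, (A j)ᶜ) ∧ (⋂ j, (A j)ᶜ).Nonempty := by
  have h_le : ∀ i, MeasurableSpace.comap (P i) (mD i) ≤ ‹MeasurableSpace Ω› :=
    fun i => (hPmeas i).comap_le
  have hAmeas : ∀ j, MeasurableSet (A j) := by
    intro j
    have hle : (⨆ i ∈ vbl j, MeasurableSpace.comap (P i) (mD i)) ≤ ‹MeasurableSpace Ω› :=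
      iSup_le fun i => iSup_le fun _ => h_le i
    exact hle _ (hA j)
  have hfact : ∀ (j : Fin m) (S : Finset (Fin m)), j ∉ S → (∀ k ∈ S, k ∉ Γ j) →
      μ (A j ∩ ⋂ k ∈ S, (A k)ᶜ) = μ (A j) * μ (⋂ k ∈ S, (A k)ᶜ) := by
    intro j S hjS hSΓ
    have hdisj : Disjoint ((vbl j : Set (Fin n))) ((S.biUnion vbl : Finset (Fin n)) : Set (Fin n)) := by
      rw [Finset.disjoint_coe, Finset.disjoint_biUnion_right]
      intro k hk
      have hkj : k ≠ j := fun h => hjS (h ▸ hk)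
      have hnot := hSΓ k hk
      rw [hΓ] at hnot
      push_neg at hnot
      exact Finset.disjoint_left.mpr fun a haj hak =>
        Finset.not_nonempty_iff_eq_empty.mpr (hnot hkj) ⟨a, Finset.mem_inter.mpr ⟨haj, hak⟩⟩
    have hind := indep_iSup_of_disjoint h_le hindep.iIndep hdisj
    have hA' : MeasurableSet[⨆ i ∈ ((vbl j : Finset (Fin n)) : Set (Fin n)),
        MeasurableSpace.comap (P i) (mD i)] (A j) := hA j
    have hN' : MeasurableSet[⨆ i ∈ ((S.biUnion vbl : Finset (Fin n)) : Set (Fin n)),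
        MeasurableSpace.comap (P i) (mD i)] (⋂ k ∈ S, (A k)ᶜ) := by
      refine Finset.measurableSet_biInter S fun k hk => MeasurableSet.compl ?_
      have hle : (⨆ i ∈ vbl k, MeasurableSpace.comap (P i) (mD i))
          ≤ ⨆ i ∈ ((S.biUnion vbl : Finset (Fin n)) : Set (Fin n)),
            MeasurableSpace.comap (P i) (mD i) :=
        biSup_mono fun i hi => Finset.mem_coe.mpr (Finset.mem_biUnion.mpr ⟨k, hk, hi⟩)
      exact hle _ (hA k)
    exact (Indep_iff _ _ μ).mp hind (A j) (⋂ k ∈ S, (A k)ᶜ) hA' hN'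
  have hpos := lll_core μ A hAmeas Γ p hp.1 d hprob hdeg hepd hfact Finset.univ
  have heq : (⋂ k ∈ (Finset.univ : Finset (Fin m)), (A k)ᶜ) = ⋂ j, (A j)ᶜ := by simp
  rw [heq] at hpos
  have h0 : 0 < μ (⋂ j, (A j)ᶜ) := (ENNReal.toReal_pos_iff.mp hpos).1
  exact ⟨h0, MeasureTheory.nonempty_of_measure_ne_zero h0.ne'⟩
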